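/- For every real t with 0 < t ≤ 1/4, one has ∑_{(x₁,x₂,x₃) ∈ ℕ³} Cat_{x₁+x₂} · Cat_{x₂+x₃} · Cat_{x₃+x₁} · t^{2(x₁+x₂+x₃)} = ((1−4t)^{3/2} − (1+4t)^{3/2} + 12t)/(8t³). In particular, at t = 1/4 the sum equals 24 − 16√2. -/

import Mathlib

open Real

open Finset in
/-- Catalan convolution: `∑_{j≤m} C_j C_{m-j} = C_{m+1}`. -/
lemma cat_conv (m : ℕ) : ∑ j ∈ range (m + 1), catalan j * catalan (m - j) = catalan (m + 1) := by
  rw [catalan_succ']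
  exact (Finset.Nat.sum_antidiagonal_eq_sum_range_succ (fun x y => catalan x * catalan y) m).symm

open Finset in
/-- Reflection of a partial Catalan convolution. -/
lemma cat_reflect (m r : ℕ) (h : r ≤ m + 1) :
    ∑ j ∈ range r, catalan j * catalan (m - j)
      = ∑ j ∈ Ico (m + 1 - r) (m + 1), catalan j * catalan (m - j) := by
  refine Finset.sum_nbij' (fun j => m - j) (fun j => m - j) ?_ ?_ ?_ ?_ ?_
  · intro a ha; simp only [mem_range] at ha; simp only [mem_Ico]; omega
  · intro a ha; simp only [mem_Ico] at ha; simp only [mem_range]; omega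
  · intro a ha; simp only [mem_range] at ha; omega
  · intro a ha; simp only [mem_Ico] at ha; omega
  · intro a ha; simp only [mem_range] at ha
    have : m - (m - a) = a := by omega
    rw [this, mul_comm]

open Finset in
/-- Half convolution: `2 ∑_{j ≤ n} C_j C_{2n+1-j} = C_{2n+2}`. -/
lemma cat_half (n : ℕ) :
    2 * ∑ j ∈ range (n + 1), catalan j * catalan (2 * n + 1 - j) = catalan (2 * n + 2) := by
  have h1 := cat_conv (2 * n + 1)
  have h2 := cat_reflect (2 * n + 1) (n + 1) (by omega)
  rw [show 2 * n + 1 + 1 = 2 * n + 2 by omega] at h1 h2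
  rw [show 2 * n + 2 - (n + 1) = n + 1 by omega] at h2
  have h3 : ∑ j ∈ range (n + 1), catalan j * catalan (2 * n + 1 - j)
      + ∑ j ∈ Ico (n + 1) (2 * n + 2), catalan j * catalan (2 * n + 1 - j)
      = ∑ j ∈ range (2 * n + 2), catalan j * catalan (2 * n + 1 - j) := by
    simp only [range_eq_Ico]
    exact Finset.sum_Ico_consecutive _ (Nat.zero_le _) (by omega : n + 1 ≤ 2 * n + 2)
  omega

/-- The triangle slice. -/
def Tri (n : ℕ) : Finset (ℕ × ℕ × ℕ) :=
  ((Finset.range (n + 1)) ×ˢ (Finset.range (n + 1)) ×ˢ (Finset.range (n + 1))).filter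
    fun p => p.1 + p.2.1 + p.2.2 = n

lemma mem_Tri {n : ℕ} {p : ℕ × ℕ × ℕ} : p ∈ Tri n ↔ p.1 + p.2.1 + p.2.2 = n := by
  rcases p with ⟨a, b, c⟩
  simp only [Tri, Finset.mem_filter, Finset.mem_product, Finset.mem_range]
  omega

open Finset in
/-- Middle segment + 2 · head = full convolution, for `u ≤ n`, with `m = 2n - u`. -/
lemma cat_middle (n u : ℕ) (hu : u ≤ n) :
    ∑ j ∈ Ico (n - u) (n + 1), catalan j * catalan (2 * n - u - j)
      + 2 * ∑ j ∈ range (n - u), catalan j * catalan (2 * n - u - j)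
      = catalan (2 * n - u + 1) := by
  have h1 := cat_conv (2 * n - u)
  have h2 := cat_reflect (2 * n - u) (n - u) (by omega)
  rw [show 2 * n - u + 1 - (n - u) = n + 1 by omega] at h2
  have h3 : ∑ j ∈ Ico 0 (n - u), catalan j * catalan (2 * n - u - j)
      + ∑ j ∈ Ico (n - u) (n + 1), catalan j * catalan (2 * n - u - j)
      = ∑ j ∈ Ico 0 (n + 1), catalan j * catalan (2 * n - u - j) :=
    Finset.sum_Ico_consecutive _ (by omega) (by omega)
  have h4 : ∑ j ∈ Ico 0 (n + 1), catalan j * catalan (2 * n - u - j)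
      + ∑ j ∈ Ico (n + 1) (2 * n - u + 1), catalan j * catalan (2 * n - u - j)
      = ∑ j ∈ Ico 0 (2 * n - u + 1), catalan j * catalan (2 * n - u - j) :=
    Finset.sum_Ico_consecutive _ (by omega) (by omega)
  simp only [← range_eq_Ico] at h3 h4
  omega

open Finset in
/-- The triangle sum rewritten as an iterated sum. -/
lemma tri_sum_eq (n : ℕ) :
    ∑ p ∈ Tri n, catalan (p.1 + p.2.1) * catalan (p.2.1 + p.2.2) * catalan (p.2.2 + p.1)
      = ∑ u ∈ range (n + 1), catalan u *
          ∑ v ∈ Ico (n - u) (n + 1), catalan v * catalan (2 * n - u - v) := by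
  simp_rw [Finset.mul_sum]
  rw [Finset.sum_sigma' (range (n + 1)) (fun u => Ico (n - u) (n + 1))
      (fun u v => catalan u * (catalan v * catalan (2 * n - u - v)))]
  refine Finset.sum_nbij' (fun p => ⟨p.1 + p.2.1, p.2.1 + p.2.2⟩)
    (fun q => (n - q.2, q.1 + q.2 - n, n - q.1)) ?_ ?_ ?_ ?_ ?_
  · intro p hp; rw [mem_Tri] at hp
    simp only [Finset.mem_sigma, mem_range, mem_Ico]; omega
  · intro q hq
    simp only [Finset.mem_sigma, mem_range, mem_Ico] at hq
    rw [mem_Tri]; simp only []; omega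
  · intro p hp; rw [mem_Tri] at hp
    simp only []
    ext <;> simp <;> omega
  · intro q hq
    simp only [Finset.mem_sigma, mem_range, mem_Ico] at hq
    simp only []
    ext <;> simp <;> omega
  · intro p hp; rw [mem_Tri] at hp
    simp only []
    rw [show 2 * n - (p.1 + p.2.1) - (p.2.1 + p.2.2) = p.2.2 + p.1 by omega]
    ring

open Finset in
/-- Reindexing the head double sum. -/
lemma head_sum_eq (n : ℕ) :
    ∑ u ∈ range (n + 1), catalan u *
        ∑ j ∈ range (n - u), catalan j * catalan (2 * n - u - j)
      = ∑ i ∈ Ico (n + 1) (2 * n + 1), catalan i * catalan (2 * n - i + 1) := by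
  have target : ∀ i, catalan i * catalan (2 * n - i + 1) =
      catalan i * ∑ u ∈ range (2 * n - i + 1), catalan u * catalan (2 * n - i - u) := by
    intro i; rw [cat_conv (2 * n - i)]
  simp_rw [target, Finset.mul_sum]
  rw [Finset.sum_sigma' (range (n + 1)) (fun u => range (n - u))
      (fun u j => catalan u * (catalan j * catalan (2 * n - u - j)))]
  rw [Finset.sum_sigma' (Ico (n + 1) (2 * n + 1)) (fun i => range (2 * n - i + 1))
      (fun i u => catalan i * (catalan u * catalan (2 * n - i - u)))]
  refine Finset.sum_nbij' (fun q => ⟨2 * n - q.1 - q.2, q.1⟩)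
    (fun q => ⟨q.2, 2 * n - q.1 - q.2⟩) ?_ ?_ ?_ ?_ ?_
  · intro q hq
    simp only [Finset.mem_sigma, mem_range, mem_Ico] at hq ⊢; omega
  · intro q hq
    simp only [Finset.mem_sigma, mem_range, mem_Ico] at hq ⊢; omega
  · intro q hq
    simp only [Finset.mem_sigma, mem_range, mem_Ico] at hq
    ext <;> simp <;> omega
  · intro q hq
    simp only [Finset.mem_sigma, mem_range, mem_Ico] at hq
    ext <;> simp <;> omega
  · intro q hq
    simp only [Finset.mem_sigma, mem_range, mem_Ico] at hq
    simp only []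
    rw [show 2 * n - (2 * n - q.1 - q.2) - q.1 = q.2 by omega]
    ring

open Finset in
/-- The key identity: `2·S(n) + C_{2n+2} = 4·C_{2n+1}`. -/
lemma key_identity (n : ℕ) :
    2 * (∑ p ∈ Tri n, catalan (p.1 + p.2.1) * catalan (p.2.1 + p.2.2) * catalan (p.2.2 + p.1))
      + catalan (2 * n + 2) = 4 * catalan (2 * n + 1) := by
  set Sig1 := ∑ u ∈ range (n + 1), catalan u * catalan (2 * n + 1 - u) with hSig1
  have e1 : ∑ p ∈ Tri n, catalan (p.1 + p.2.1) * catalan (p.2.1 + p.2.2) * catalan (p.2.2 + p.1)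
      + 2 * ∑ u ∈ range (n + 1), catalan u *
          ∑ j ∈ range (n - u), catalan j * catalan (2 * n - u - j) = Sig1 := by
    rw [tri_sum_eq]
    rw [Finset.mul_sum, ← Finset.sum_add_distrib]
    refine Finset.sum_congr rfl fun u hu => ?_
    rw [mem_range] at hu
    have := cat_middle n u (by omega)
    have e : 2 * n + 1 - u = 2 * n - u + 1 := by omega
    rw [e, ← this]; ring
  have e2 : 2 * Sig1 = catalan (2 * n + 2) := cat_half n
  have e3 : ∑ u ∈ range (n + 1), catalan u *
        ∑ j ∈ range (n - u), catalan j * catalan (2 * n - u - j)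
      + catalan (2 * n + 1) = Sig1 := by
    rw [head_sum_eq]
    have hs : ∑ i ∈ Ico (n + 1) (2 * n + 1), catalan i * catalan (2 * n - i + 1)
        = ∑ i ∈ Ico (n + 1) (2 * n + 1), catalan i * catalan (2 * n + 1 - i) := by
      refine Finset.sum_congr rfl fun i hi => ?_
      rw [mem_Ico] at hi
      congr 2
      omega
    rw [hs]
    have htop : ∑ i ∈ Ico (n + 1) (2 * n + 1 + 1), catalan i * catalan (2 * n + 1 - i)
        = ∑ i ∈ Ico (n + 1) (2 * n + 1), catalan i * catalan (2 * n + 1 - i)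
          + catalan (2 * n + 1) * catalan (2 * n + 1 - (2 * n + 1)) :=
      Finset.sum_Ico_succ_top (by omega) _
    have h2 := cat_reflect (2 * n + 1) (n + 1) (by omega)
    rw [show 2 * n + 1 + 1 - (n + 1) = n + 1 by omega] at h2
    rw [show 2 * n + 1 - (2 * n + 1) = 0 by omega, catalan_zero, mul_one] at htop
    rw [hSig1]
    omega
  omega

lemma centralBinom_sq_bound : ∀ n : ℕ, (Nat.centralBinom n) ^ 2 * (n + 1) ≤ 16 ^ n := by
  intro n
  induction n with
  | zero => simp [Nat.centralBinom]
  | succ n ih =>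
    have h := Nat.succ_mul_centralBinom_succ n
    have key : Nat.centralBinom (n + 1) ^ 2 * (n + 2) * (n + 1) ^ 3
        ≤ 16 ^ (n + 1) * (n + 1) ^ 3 := by
      calc Nat.centralBinom (n + 1) ^ 2 * (n + 2) * (n + 1) ^ 3
          = ((n + 1) * Nat.centralBinom (n + 1)) ^ 2 * ((n + 2) * (n + 1)) := by ring
        _ = (2 * (2 * n + 1) * Nat.centralBinom n) ^ 2 * ((n + 2) * (n + 1)) := by rw [h]
        _ = (Nat.centralBinom n ^ 2 * (n + 1)) * (4 * (2 * n + 1) ^ 2 * (n + 2)) := by ring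
        _ ≤ 16 ^ n * (4 * (2 * n + 1) ^ 2 * (n + 2)) := Nat.mul_le_mul_right _ ih
        _ ≤ 16 ^ n * (16 * (n + 1) ^ 3) := Nat.mul_le_mul_left _ (by nlinarith)
        _ = 16 ^ (n + 1) * (n + 1) ^ 3 := by ring
    exact Nat.le_of_mul_le_mul_right key (by positivity)

lemma catalan_real_bound (n : ℕ) :
    (catalan n : ℝ) * (((n : ℝ) + 1) * Real.sqrt ((n : ℝ) + 1)) ≤ 4 ^ n := by
  have h0 : (0 : ℝ) ≤ (n : ℝ) + 1 := by positivity
  have hcast : ((Nat.centralBinom n : ℝ)) ^ 2 * ((n : ℝ) + 1) ≤ (16 : ℝ) ^ n := by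
    exact_mod_cast centralBinom_sq_bound n
  have hcb : ((n : ℝ) + 1) * (catalan n : ℝ) = (Nat.centralBinom n : ℝ) := by
    exact_mod_cast succ_mul_catalan_eq_centralBinom n
  have hs : Real.sqrt ((n : ℝ) + 1) ^ 2 = (n : ℝ) + 1 := Real.sq_sqrt h0
  have hsq : ((catalan n : ℝ) * (((n : ℝ) + 1) * Real.sqrt ((n : ℝ) + 1))) ^ 2
      ≤ ((4 : ℝ) ^ n) ^ 2 := by
    have e1 : ((catalan n : ℝ) * (((n : ℝ) + 1) * Real.sqrt ((n : ℝ) + 1))) ^ 2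
        = (((n : ℝ) + 1) * (catalan n : ℝ)) ^ 2 * (Real.sqrt ((n : ℝ) + 1) ^ 2) := by ring
    have e2 : ((4 : ℝ) ^ n) ^ 2 = (16 : ℝ) ^ n := by
      rw [← pow_mul, mul_comm, pow_mul]; norm_num
    rw [e1, e2, hcb, hs]
    exact hcast
  have h1 : (0 : ℝ) ≤ (catalan n : ℝ) * (((n : ℝ) + 1) * Real.sqrt ((n : ℝ) + 1)) := by
    positivity
  exact (pow_le_pow_iff_left₀ h1 (by positivity) two_ne_zero).mp hsq

/-- The dominating sequence `1/(k+1)^{3/2}`. -/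
noncomputable def Hdom (k : ℕ) : ℝ := 1 / (((k : ℝ) + 1) * Real.sqrt ((k : ℝ) + 1))

lemma Hdom_pos (k : ℕ) : 0 < Hdom k := by
  unfold Hdom
  positivity

lemma catalan_le_Hdom (n : ℕ) : (catalan n : ℝ) ≤ 4 ^ n * Hdom n := by
  unfold Hdom
  rw [mul_one_div, le_div_iff₀ (by positivity)]
  exact catalan_real_bound n

lemma Hdom_anti {x y : ℕ} (h : x ≤ y) : Hdom y ≤ Hdom x := by
  unfold Hdom
  have hc : ((x : ℝ)) ≤ (y : ℝ) := by exact_mod_cast h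
  gcongr
  all_goals first | positivity | linarith

lemma summable_Hdom : Summable Hdom := by
  have h32 : Summable (fun n : ℕ => 1 / (n : ℝ) ^ (3 / 2 : ℝ)) :=
    Real.summable_one_div_nat_rpow.mpr (by norm_num)
  have h := (summable_nat_add_iff 1).mpr h32
  refine h.congr fun k => ?_
  have h0 : (0 : ℝ) < (k : ℝ) + 1 := by positivity
  unfold Hdom
  push_cast
  congr 1
  rw [show (3 / 2 : ℝ) = 1 + 1 / 2 by norm_num, Real.rpow_add h0, Real.rpow_one,
    ← Real.sqrt_eq_rpow]

lemma cat_term_bound {y : ℝ} (hy : |y| ≤ 1 / 4) (n : ℕ) :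
    ‖(catalan n : ℝ) * y ^ (n + 1)‖ ≤ (1 / 4) * Hdom n := by
  rw [norm_mul, norm_pow, Real.norm_eq_abs, Real.norm_eq_abs, Nat.abs_cast]
  have h1 : |y| ^ (n + 1) ≤ (1 / 4 : ℝ) ^ (n + 1) := pow_le_pow_left₀ (abs_nonneg y) hy _
  have h2 : (catalan n : ℝ) * |y| ^ (n + 1) ≤ (4 ^ n * Hdom n) * (1 / 4) ^ (n + 1) := by
    apply mul_le_mul (catalan_le_Hdom n) h1 (by positivity)
    exact le_of_lt (mul_pos (by positivity) (Hdom_pos n))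
  refine h2.trans (le_of_eq ?_)
  have e : (4 : ℝ) ^ n * (1 / 4 : ℝ) ^ n = 1 := by rw [← mul_pow]; norm_num
  calc (4 ^ n * Hdom n) * (1 / 4 : ℝ) ^ (n + 1)
      = ((4 : ℝ) ^ n * (1 / 4 : ℝ) ^ n) * ((1 / 4) * Hdom n) := by rw [pow_succ]; ring
    _ = (1 / 4) * Hdom n := by rw [e, one_mul]

lemma cat_series_norm_summable {y : ℝ} (hy : |y| ≤ 1 / 4) :
    Summable (fun n => ‖(catalan n : ℝ) * y ^ (n + 1)‖) :=
  Summable.of_nonneg_of_le (fun n => norm_nonneg _) (cat_term_bound hy)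
    (summable_Hdom.mul_left _)

lemma cat_series_summable {y : ℝ} (hy : |y| ≤ 1 / 4) :
    Summable (fun n => (catalan n : ℝ) * y ^ (n + 1)) :=
  (cat_series_norm_summable hy).of_norm

open Finset in
lemma catg_sq {y : ℝ} (hy : |y| ≤ 1 / 4) :
    (∑' n : ℕ, (catalan n : ℝ) * y ^ (n + 1)) ^ 2
      = (∑' n : ℕ, (catalan n : ℝ) * y ^ (n + 1)) - y := by
  have hnorm := cat_series_norm_summable hy
  have hsum := cat_series_summable hy
  rw [sq, tsum_mul_tsum_eq_tsum_sum_antidiagonal_of_summable_norm hnorm hnorm]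
  have hinner : ∀ n : ℕ, ∑ kl ∈ antidiagonal n,
      ((catalan kl.1 : ℝ) * y ^ (kl.1 + 1)) * ((catalan kl.2 : ℝ) * y ^ (kl.2 + 1))
      = (catalan (n + 1) : ℝ) * y ^ (n + 2) := by
    intro n
    have : ∀ kl ∈ antidiagonal n,
        ((catalan kl.1 : ℝ) * y ^ (kl.1 + 1)) * ((catalan kl.2 : ℝ) * y ^ (kl.2 + 1))
        = ((catalan kl.1 : ℝ) * (catalan kl.2 : ℝ)) * y ^ (n + 2) := by
      intro kl hkl
      rw [Finset.HasAntidiagonal.mem_antidiagonal] at hkl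
      rw [← hkl]
      rw [show kl.1 + kl.2 + 2 = (kl.1 + 1) + (kl.2 + 1) by ring, pow_add]
      ring
    rw [Finset.sum_congr rfl this, ← Finset.sum_mul]
    congr 1
    rw [catalan_succ']
    push_cast
    rfl
  rw [tsum_congr hinner]
  have hsucc : Summable (fun n => (catalan (n + 1) : ℝ) * y ^ (n + 1 + 1)) := by
    have := hsum.comp_injective (add_left_injective 1)
    exact this.congr fun n => rfl
  have hzero := tsum_eq_zero_add' (f := fun n => (catalan n : ℝ) * y ^ (n + 1)) hsucc
  simp only [catalan_zero, Nat.cast_one, one_mul, pow_one] at hzero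
  rw [hzero]
  have : ∀ n : ℕ, (catalan (n + 1) : ℝ) * y ^ (n + 1 + 1) = (catalan (n + 1) : ℝ) * y ^ (n + 2) :=
    fun n => rfl
  rw [tsum_congr this]
  ring

lemma catg_sqrt {y : ℝ} (hy : |y| ≤ 1 / 4) :
    Real.sqrt (1 - 4 * y) = 1 - 2 * ∑' n : ℕ, (catalan n : ℝ) * y ^ (n + 1) := by
  set g := ∑' n : ℕ, (catalan n : ℝ) * y ^ (n + 1) with hg
  have hg2 : g ^ 2 = g - y := catg_sq hy
  have habs : |(1 / 4 : ℝ)| ≤ 1 / 4 := by rw [abs_of_pos] <;> norm_num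
  have hstar2 := catg_sq habs
  set gs := ∑' n : ℕ, (catalan n : ℝ) * (1 / 4 : ℝ) ^ (n + 1) with hgs
  have hgs_half : gs = 1 / 2 := by
    have h0 : (gs - 1 / 2) ^ 2 = 0 := by nlinarith [hstar2]
    have := pow_eq_zero_iff (n := 2) (by norm_num) |>.mp h0
    linarith
  have hgle : |g| ≤ 1 / 2 := by
    have h1 : |g| ≤ ∑' n : ℕ, ‖(catalan n : ℝ) * y ^ (n + 1)‖ := by
      rw [hg, ← Real.norm_eq_abs]
      exact norm_tsum_le_tsum_norm (cat_series_norm_summable hy)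
    have h2 : ∑' n : ℕ, ‖(catalan n : ℝ) * y ^ (n + 1)‖ ≤ gs := by
      refine Summable.tsum_le_tsum ?_ (cat_series_norm_summable hy) (cat_series_summable habs)
      intro n
      rw [norm_mul, norm_pow, Real.norm_eq_abs, Real.norm_eq_abs, Nat.abs_cast]
      apply mul_le_mul_of_nonneg_left _ (by positivity)
      exact pow_le_pow_left₀ (abs_nonneg y) hy _
    linarith [hgs_half]
  have hfact : 1 - 4 * y = (1 - 2 * g) ^ 2 := by linear_combination -4 * hg2
  rw [hfact, Real.sqrt_sq (by linarith [(abs_le.mp hgle).2])]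

lemma rpow_three_halves {a : ℝ} (ha : 0 ≤ a) : a ^ (3 / 2 : ℝ) = a * Real.sqrt a := by
  rcases eq_or_lt_of_le ha with h | h
  · rw [← h, Real.zero_rpow (by norm_num), Real.sqrt_zero, mul_zero]
  · rw [Real.sqrt_eq_rpow, show (3 / 2 : ℝ) = 1 + 1 / 2 by norm_num, Real.rpow_add h,
      Real.rpow_one]

lemma pow_shift (t : ℝ) (a b : ℕ) (h : b = a + 1) : t ^ b = t ^ a * t := by
  rw [h, pow_succ]

lemma triple_le {t : ℝ} (ht0 : 0 ≤ t) (ht : t ≤ 1 / 4) (a b c : ℕ) :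
    (catalan (a + b) : ℝ) * (catalan (b + c) : ℝ) * (catalan (c + a) : ℝ)
      * t ^ (2 * (a + b + c)) ≤ Hdom a * (Hdom b * Hdom c) := by
  have hA : (0 : ℝ) < 4 ^ (a + b) * Hdom (a + b) := mul_pos (by positivity) (Hdom_pos _)
  have hB : (0 : ℝ) < 4 ^ (b + c) * Hdom (b + c) := mul_pos (by positivity) (Hdom_pos _)
  have hC : (0 : ℝ) < 4 ^ (c + a) * Hdom (c + a) := mul_pos (by positivity) (Hdom_pos _)
  have b1 := catalan_le_Hdom (a + b)
  have b2 := catalan_le_Hdom (b + c)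
  have b3 := catalan_le_Hdom (c + a)
  have hcats : (catalan (a + b) : ℝ) * (catalan (b + c) : ℝ) * (catalan (c + a) : ℝ)
      ≤ (4 ^ (a + b) * Hdom (a + b)) * (4 ^ (b + c) * Hdom (b + c))
        * (4 ^ (c + a) * Hdom (c + a)) := by
    have s1 : (catalan (a + b) : ℝ) * (catalan (b + c) : ℝ)
        ≤ (4 ^ (a + b) * Hdom (a + b)) * (4 ^ (b + c) * Hdom (b + c)) :=
      mul_le_mul b1 b2 (Nat.cast_nonneg _) hA.le
    exact mul_le_mul s1 b3 (Nat.cast_nonneg _) (mul_pos hA hB).le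
  have htpow : t ^ (2 * (a + b + c)) ≤ (1 / 4 : ℝ) ^ (2 * (a + b + c)) :=
    pow_le_pow_left₀ ht0 ht _
  have step1 : (catalan (a + b) : ℝ) * (catalan (b + c) : ℝ) * (catalan (c + a) : ℝ)
        * t ^ (2 * (a + b + c))
      ≤ ((4 ^ (a + b) * Hdom (a + b)) * (4 ^ (b + c) * Hdom (b + c))
          * (4 ^ (c + a) * Hdom (c + a))) * (1 / 4 : ℝ) ^ (2 * (a + b + c)) :=
    mul_le_mul hcats htpow (pow_nonneg ht0 _) (mul_pos (mul_pos hA hB) hC).le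
  have hpowid : ((4 : ℝ) ^ (a + b) * 4 ^ (b + c) * 4 ^ (c + a))
      * (1 / 4 : ℝ) ^ (2 * (a + b + c)) = 1 := by
    rw [← pow_add, ← pow_add, show (a + b) + (b + c) + (c + a) = 2 * (a + b + c) by ring,
      ← mul_pow]
    norm_num
  have step2 : ((4 ^ (a + b) * Hdom (a + b)) * (4 ^ (b + c) * Hdom (b + c))
        * (4 ^ (c + a) * Hdom (c + a))) * (1 / 4 : ℝ) ^ (2 * (a + b + c))
      = Hdom (a + b) * Hdom (b + c) * Hdom (c + a) := by
    have e : ((4 ^ (a + b) * Hdom (a + b)) * (4 ^ (b + c) * Hdom (b + c))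
          * (4 ^ (c + a) * Hdom (c + a))) * (1 / 4 : ℝ) ^ (2 * (a + b + c))
        = (((4 : ℝ) ^ (a + b) * 4 ^ (b + c) * 4 ^ (c + a)) * (1 / 4 : ℝ) ^ (2 * (a + b + c)))
          * (Hdom (a + b) * Hdom (b + c) * Hdom (c + a)) := by ring
    rw [e, hpowid, one_mul]
  have step3 : Hdom (a + b) * Hdom (b + c) * Hdom (c + a)
      ≤ Hdom a * (Hdom b * Hdom c) := by
    have h1 : Hdom (a + b) ≤ Hdom a := Hdom_anti (by omega)
    have h2 : Hdom (b + c) ≤ Hdom b := Hdom_anti (by omega)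
    have h3 : Hdom (c + a) ≤ Hdom c := Hdom_anti (by omega)
    have e : Hdom a * (Hdom b * Hdom c) = Hdom a * Hdom b * Hdom c := by ring
    rw [e]
    exact mul_le_mul (mul_le_mul h1 h2 (Hdom_pos _).le (Hdom_pos _).le) h3
      (Hdom_pos _).le (mul_nonneg (Hdom_pos _).le (Hdom_pos _).le)
  calc (catalan (a + b) : ℝ) * (catalan (b + c) : ℝ) * (catalan (c + a) : ℝ)
        * t ^ (2 * (a + b + c)) ≤ _ := step1
    _ = Hdom (a + b) * Hdom (b + c) * Hdom (c + a) := step2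
    _ ≤ Hdom a * (Hdom b * Hdom c) := step3

lemma summable_Hdom3 : Summable (fun p : ℕ × ℕ × ℕ => Hdom p.1 * (Hdom p.2.1 * Hdom p.2.2)) := by
  have inner : Summable (fun q : ℕ × ℕ => Hdom q.1 * Hdom q.2) :=
    summable_Hdom.mul_of_nonneg summable_Hdom (fun k => (Hdom_pos k).le)
      (fun k => (Hdom_pos k).le)
  exact summable_Hdom.mul_of_nonneg inner (fun k => (Hdom_pos k).le)
    (fun q => mul_nonneg (Hdom_pos _).le (Hdom_pos _).le)

lemma triple_summable {t : ℝ} (ht0 : 0 ≤ t) (ht : t ≤ 1 / 4) :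
    Summable (fun p : ℕ × ℕ × ℕ => (catalan (p.1 + p.2.1) : ℝ) * (catalan (p.2.1 + p.2.2) : ℝ) *
      (catalan (p.2.2 + p.1) : ℝ) * t ^ (2 * (p.1 + p.2.1 + p.2.2))) := by
  refine Summable.of_nonneg_of_le (fun p => ?_) (fun p => triple_le ht0 ht p.1 p.2.1 p.2.2)
    summable_Hdom3
  have := pow_nonneg ht0 (2 * (p.1 + p.2.1 + p.2.2))
  positivity

lemma fiber_value (t : ℝ) (n : ℕ) :
    ∑ p ∈ Tri n, (catalan (p.1 + p.2.1) : ℝ) * (catalan (p.2.1 + p.2.2) : ℝ) *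
        (catalan (p.2.2 + p.1) : ℝ) * t ^ (2 * (p.1 + p.2.1 + p.2.2))
      = (2 * (catalan (2 * n + 1) : ℝ) - (catalan (2 * n + 2) : ℝ) / 2) * t ^ (2 * n) := by
  have h1 : ∑ p ∈ Tri n, (catalan (p.1 + p.2.1) : ℝ) * (catalan (p.2.1 + p.2.2) : ℝ) *
        (catalan (p.2.2 + p.1) : ℝ) * t ^ (2 * (p.1 + p.2.1 + p.2.2))
      = ((∑ p ∈ Tri n, catalan (p.1 + p.2.1) * catalan (p.2.1 + p.2.2)
          * catalan (p.2.2 + p.1) : ℕ) : ℝ) * t ^ (2 * n) := by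
    rw [Nat.cast_sum, Finset.sum_mul]
    refine Finset.sum_congr rfl fun p hp => ?_
    rw [mem_Tri] at hp
    rw [hp]
    push_cast
    ring
  rw [h1]
  have hk : 2 * ((∑ p ∈ Tri n, catalan (p.1 + p.2.1) * catalan (p.2.1 + p.2.2)
        * catalan (p.2.2 + p.1) : ℕ) : ℝ) + (catalan (2 * n + 2) : ℝ)
      = 4 * (catalan (2 * n + 1) : ℝ) := by
    exact_mod_cast key_identity n
  have he : ((∑ p ∈ Tri n, catalan (p.1 + p.2.1) * catalan (p.2.1 + p.2.2)
        * catalan (p.2.2 + p.1) : ℕ) : ℝ)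
      = 2 * (catalan (2 * n + 1) : ℝ) - (catalan (2 * n + 2) : ℝ) / 2 := by linarith
  rw [he]

set_option maxHeartbeats 1000000 in
lemma main_eq {t : ℝ} (ht0 : 0 < t) (ht : t ≤ 1 / 4) :
    ∑' x : ℕ × ℕ × ℕ,
        (catalan (x.1 + x.2.1) : ℝ) * (catalan (x.2.1 + x.2.2) : ℝ) *
          (catalan (x.2.2 + x.1) : ℝ) * t ^ (2 * (x.1 + x.2.1 + x.2.2)) =
      ((1 - 4 * t) ^ (3 / 2 : ℝ) - (1 + 4 * t) ^ (3 / 2 : ℝ) + 12 * t) / (8 * t ^ 3) := by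
  have ht0' : (0 : ℝ) ≤ t := ht0.le
  have habs : |t| ≤ 1 / 4 := by rw [abs_of_pos ht0]; exact ht
  have habsn : |(-t)| ≤ 1 / 4 := by rwa [abs_neg]
  have hsum := triple_summable ht0' ht
  -- decompose fiberwise
  have hfib := hsum.hasSum.tsum_fiberwise (fun p : ℕ × ℕ × ℕ => p.1 + p.2.1 + p.2.2)
  have hfiber_eq : ∀ n : ℕ,
      (∑' b : ↑((fun p : ℕ × ℕ × ℕ => p.1 + p.2.1 + p.2.2) ⁻¹' {n}),
        (catalan ((b : ℕ × ℕ × ℕ).1 + (b : ℕ × ℕ × ℕ).2.1) : ℝ)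
          * (catalan ((b : ℕ × ℕ × ℕ).2.1 + (b : ℕ × ℕ × ℕ).2.2) : ℝ)
          * (catalan ((b : ℕ × ℕ × ℕ).2.2 + (b : ℕ × ℕ × ℕ).1) : ℝ)
          * t ^ (2 * ((b : ℕ × ℕ × ℕ).1 + (b : ℕ × ℕ × ℕ).2.1 + (b : ℕ × ℕ × ℕ).2.2)))
      = (2 * (catalan (2 * n + 1) : ℝ) - (catalan (2 * n + 2) : ℝ) / 2) * t ^ (2 * n) := by
    intro n
    have hset : ((fun p : ℕ × ℕ × ℕ => p.1 + p.2.1 + p.2.2) ⁻¹' {n})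
        = (↑(Tri n) : Set (ℕ × ℕ × ℕ)) := by
      ext p
      simp only [Set.mem_preimage, Set.mem_singleton_iff, Finset.coe_sort_coe, Finset.mem_coe]
      rw [mem_Tri]
    rw [hset]
    exact (Finset.tsum_subtype' (Tri n) (fun p : ℕ × ℕ × ℕ =>
      (catalan (p.1 + p.2.1) : ℝ) * (catalan (p.2.1 + p.2.2) : ℝ) *
        (catalan (p.2.2 + p.1) : ℝ) * t ^ (2 * (p.1 + p.2.1 + p.2.2)))).trans
      (fiber_value t n)
  -- summability of the various one-dimensional series
  have sb1 : Summable (fun n => (catalan n : ℝ) * t ^ (n + 1)) := cat_series_summable habs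
  have sb2 : Summable (fun n => (catalan n : ℝ) * (-t) ^ (n + 1)) := cat_series_summable habsn
  have inj2 : Function.Injective (fun k : ℕ => 2 * k) := fun a b hab => by
    simpa using hab
  have inj21 : Function.Injective (fun k : ℕ => 2 * k + 1) :=
    (add_left_injective 1).comp inj2
  have inj22 : Function.Injective (fun k : ℕ => 2 * k + 2) :=
    (add_left_injective 2).comp inj2
  have sE1 : Summable (fun k => (catalan (2 * k) : ℝ) * t ^ (2 * k + 1)) :=
    (sb1.comp_injective inj2).congr fun k => rfl
  have sE1n : Summable (fun k => (catalan (2 * k) : ℝ) * (-t) ^ (2 * k + 1)) :=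
    (sb2.comp_injective inj2).congr fun k => rfl
  have sE2 : Summable (fun k => (catalan (2 * k + 1) : ℝ) * t ^ (2 * k + 2)) :=
    (sb1.comp_injective inj21).congr fun k => rfl
  have sE2n : Summable (fun k => (catalan (2 * k + 1) : ℝ) * (-t) ^ (2 * k + 2)) :=
    (sb2.comp_injective inj21).congr fun k => rfl
  have sE3 : Summable (fun k => (catalan (2 * k + 2) : ℝ) * t ^ (2 * k + 3)) :=
    (sb1.comp_injective inj22).congr fun k => rfl
  have sZ1 : Summable (fun k => (catalan (2 * k + 1) : ℝ) * t ^ (2 * k + 3)) := by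
    refine (sE2.mul_left t).congr fun k => ?_
    rw [pow_shift t (2 * k + 2) (2 * k + 3) (by omega)]
    ring
  -- even/odd splits
  set s1 := ∑' n : ℕ, (catalan n : ℝ) * t ^ (n + 1) with hs1def
  set s2 := ∑' n : ℕ, (catalan n : ℝ) * (-t) ^ (n + 1) with hs2def
  set X := ∑' k : ℕ, (catalan (2 * k) : ℝ) * t ^ (2 * k + 1) with hXdef
  set Y := ∑' k : ℕ, (catalan (2 * k + 1) : ℝ) * t ^ (2 * k + 2) with hYdef
  set Z := ∑' k : ℕ, (catalan (2 * k + 2) : ℝ) * t ^ (2 * k + 3) with hZdef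
  set Z1 := ∑' k : ℕ, (catalan (2 * k + 1) : ℝ) * t ^ (2 * k + 3) with hZ1def
  have hXeq : s1 - s2 = 2 * X := by
    have he : Summable (fun k => (catalan (2 * k) : ℝ) * t ^ (2 * k + 1)
        - (catalan (2 * k) : ℝ) * (-t) ^ (2 * k + 1)) := sE1.sub sE1n
    have ho : Summable (fun k => (catalan (2 * k + 1) : ℝ) * t ^ (2 * k + 1 + 1)
        - (catalan (2 * k + 1) : ℝ) * (-t) ^ (2 * k + 1 + 1)) :=
      (sE2.sub sE2n).congr fun k => rfl
    have hsplit := tsum_even_add_odd (f := fun n =>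
      (catalan n : ℝ) * t ^ (n + 1) - (catalan n : ℝ) * (-t) ^ (n + 1)) he ho
    have hodd0 : ∑' k : ℕ, ((catalan (2 * k + 1) : ℝ) * t ^ (2 * k + 1 + 1)
        - (catalan (2 * k + 1) : ℝ) * (-t) ^ (2 * k + 1 + 1)) = 0 := by
      have hz : ∀ k : ℕ, (catalan (2 * k + 1) : ℝ) * t ^ (2 * k + 1 + 1)
          - (catalan (2 * k + 1) : ℝ) * (-t) ^ (2 * k + 1 + 1) = 0 := by
        intro k
        rw [Even.neg_pow ⟨k + 1, by ring⟩]
        ring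
      rw [tsum_congr hz, tsum_zero]
    have heven : ∑' k : ℕ, ((catalan (2 * k) : ℝ) * t ^ (2 * k + 1)
        - (catalan (2 * k) : ℝ) * (-t) ^ (2 * k + 1)) = 2 * X := by
      have hz : ∀ k : ℕ, (catalan (2 * k) : ℝ) * t ^ (2 * k + 1)
          - (catalan (2 * k) : ℝ) * (-t) ^ (2 * k + 1)
          = 2 * ((catalan (2 * k) : ℝ) * t ^ (2 * k + 1)) := by
        intro k
        rw [Odd.neg_pow ⟨k, by ring⟩]
        ring
      rw [tsum_congr hz, tsum_mul_left]
    have hdiff := Summable.tsum_sub sb1 sb2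
    rw [heven, hodd0] at hsplit
    rw [← hs1def, ← hs2def] at hdiff
    linarith [hsplit, hdiff]
  have hYeq : s1 + s2 = 2 * Y := by
    have he : Summable (fun k => (catalan (2 * k) : ℝ) * t ^ (2 * k + 1)
        + (catalan (2 * k) : ℝ) * (-t) ^ (2 * k + 1)) := sE1.add sE1n
    have ho : Summable (fun k => (catalan (2 * k + 1) : ℝ) * t ^ (2 * k + 1 + 1)
        + (catalan (2 * k + 1) : ℝ) * (-t) ^ (2 * k + 1 + 1)) :=
      (sE2.add sE2n).congr fun k => rfl
    have hsplit := tsum_even_add_odd (f := fun n =>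
      (catalan n : ℝ) * t ^ (n + 1) + (catalan n : ℝ) * (-t) ^ (n + 1)) he ho
    have heven0 : ∑' k : ℕ, ((catalan (2 * k) : ℝ) * t ^ (2 * k + 1)
        + (catalan (2 * k) : ℝ) * (-t) ^ (2 * k + 1)) = 0 := by
      have hz : ∀ k : ℕ, (catalan (2 * k) : ℝ) * t ^ (2 * k + 1)
          + (catalan (2 * k) : ℝ) * (-t) ^ (2 * k + 1) = 0 := by
        intro k
        rw [Odd.neg_pow ⟨k, by ring⟩]
        ring
      rw [tsum_congr hz, tsum_zero]
    have hodd : ∑' k : ℕ, ((catalan (2 * k + 1) : ℝ) * t ^ (2 * k + 1 + 1)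
        + (catalan (2 * k + 1) : ℝ) * (-t) ^ (2 * k + 1 + 1)) = 2 * Y := by
      have hz : ∀ k : ℕ, (catalan (2 * k + 1) : ℝ) * t ^ (2 * k + 1 + 1)
          + (catalan (2 * k + 1) : ℝ) * (-t) ^ (2 * k + 1 + 1)
          = 2 * ((catalan (2 * k + 1) : ℝ) * t ^ (2 * k + 2)) := by
        intro k
        rw [Even.neg_pow ⟨k + 1, by ring⟩]
        ring
      rw [tsum_congr hz, tsum_mul_left]
    have hadd := Summable.tsum_add sb1 sb2
    rw [heven0, hodd] at hsplit
    rw [← hs1def, ← hs2def] at hadd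
    linarith [hsplit, hadd]
  have hZeq : X = t + Z := by
    have hsucc : Summable (fun k => (catalan (2 * (k + 1)) : ℝ) * t ^ (2 * (k + 1) + 1)) :=
      sE3.congr fun k => rfl
    have hpeel := tsum_eq_zero_add'
      (f := fun k => (catalan (2 * k) : ℝ) * t ^ (2 * k + 1)) hsucc
    have hpeel' : X = (catalan (2 * 0) : ℝ) * t ^ (2 * 0 + 1)
        + ∑' k : ℕ, (catalan (2 * (k + 1)) : ℝ) * t ^ (2 * (k + 1) + 1) := hpeel
    have h0 : (catalan (2 * 0) : ℝ) * t ^ (2 * 0 + 1) = t := by norm_num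
    have htail : ∑' k : ℕ, (catalan (2 * (k + 1)) : ℝ) * t ^ (2 * (k + 1) + 1) = Z :=
      tsum_congr fun k => rfl
    rw [hpeel', h0, htail]
  have hZ1eq : Z1 = t * Y := by
    rw [hZ1def, hYdef, ← tsum_mul_left]
    refine tsum_congr fun k => ?_
    rw [pow_shift t (2 * k + 2) (2 * k + 3) (by omega)]
    ring
  -- sqrt expansions
  have hsq1 := catg_sqrt habs
  have hsq2 := catg_sqrt habsn
  rw [show 1 - 4 * (-t) = 1 + 4 * t by ring] at hsq2
  have hr1 : (1 - 4 * t) ^ (3 / 2 : ℝ) = (1 - 4 * t) * (1 - 2 * s1) := by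
    rw [rpow_three_halves (by linarith : (0 : ℝ) ≤ 1 - 4 * t), hsq1, hs1def]
  have hr2 : (1 + 4 * t) ^ (3 / 2 : ℝ) = (1 + 4 * t) * (1 - 2 * s2) := by
    rw [rpow_three_halves (by linarith : (0 : ℝ) ≤ 1 + 4 * t), hsq2, hs2def]
  -- assemble
  rw [← hfib.tsum_eq, tsum_congr hfiber_eq]
  rw [eq_div_iff (by positivity : (8 : ℝ) * t ^ 3 ≠ 0)]
  have hmain : (∑' n : ℕ, (2 * (catalan (2 * n + 1) : ℝ) - (catalan (2 * n + 2) : ℝ) / 2)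
        * t ^ (2 * n)) * (8 * t ^ 3) = 16 * Z1 - 4 * Z := by
    rw [← tsum_mul_right]
    have hc : ∀ n : ℕ, ((2 * (catalan (2 * n + 1) : ℝ) - (catalan (2 * n + 2) : ℝ) / 2)
          * t ^ (2 * n)) * (8 * t ^ 3)
        = 16 * ((catalan (2 * n + 1) : ℝ) * t ^ (2 * n + 3))
          - 4 * ((catalan (2 * n + 2) : ℝ) * t ^ (2 * n + 3)) := by
      intro n
      have hp : t ^ (2 * n + 3) = t ^ (2 * n) * t ^ 3 := pow_add t (2 * n) 3
      rw [hp]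
      ring
    rw [tsum_congr hc, Summable.tsum_sub (sZ1.mul_left 16) (sE3.mul_left 4),
      tsum_mul_left, tsum_mul_left, ← hZ1def, ← hZdef]
  rw [hmain, hr1, hr2]
  linear_combination (2 : ℝ) * hXeq + (-8 * t) * hYeq + (4 : ℝ) * hZeq + (16 : ℝ) * hZ1eq

/-- For `0 < t ≤ 1/4`, the sum `S(C₃)(t)` associated with the triangle equals
`((1−4t)^{3/2} − (1+4t)^{3/2} + 12t)/(8t³)`; in particular at `t = 1/4` it equals
`24 − 16√2`. -/
theorem stmt_9 :
    (∀ t : ℝ, 0 < t → t ≤ 1 / 4 →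
      ∑' x : ℕ × ℕ × ℕ,
        (catalan (x.1 + x.2.1) : ℝ) * (catalan (x.2.1 + x.2.2) : ℝ) *
          (catalan (x.2.2 + x.1) : ℝ) * t ^ (2 * (x.1 + x.2.1 + x.2.2)) =
        ((1 - 4 * t) ^ (3 / 2 : ℝ) - (1 + 4 * t) ^ (3 / 2 : ℝ) + 12 * t) / (8 * t ^ 3)) ∧
    ∑' x : ℕ × ℕ × ℕ,
      (catalan (x.1 + x.2.1) : ℝ) * (catalan (x.2.1 + x.2.2) : ℝ) *
        (catalan (x.2.2 + x.1) : ℝ) * (1 / 4 : ℝ) ^ (2 * (x.1 + x.2.1 + x.2.2)) =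
      24 - 16 * Real.sqrt 2 := by
  constructor
  · exact fun t ht0 ht1 => main_eq ht0 ht1
  · rw [main_eq (by norm_num : (0:ℝ) < 1/4) (le_refl _)]
    rw [show (1 : ℝ) - 4 * (1 / 4) = 0 by norm_num, show (1 : ℝ) + 4 * (1 / 4) = 2 by norm_num]
    rw [Real.zero_rpow (by norm_num), rpow_three_halves (by norm_num : (0:ℝ) ≤ 2)]
    rw [div_eq_iff (by norm_num : (8 : ℝ) * (1 / 4 : ℝ) ^ 3 ≠ 0)]
    ring
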